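/- Let λ ∈ ℝ and let a : ℕ → ℝ be any sequence (the coefficients of an invertible power series A(t)). For k ∈ ℕ define ℓ_{k,λ}(x) := (1/k!)·Σ_{j=0}^{k} (−x)^j·(1)_{j,λ}·L(k,j) (the coefficient of t^k in e_λ(−xt/(1−t))), and define y_{n,λ}(x) := Σ_{k=0}^{n} a_{n−k}·ℓ_{k,λ}(x) (the coefficient of t^n in A(t)·e_λ(−xt/(1−t))). Then for every n ≥ 1 and every x ∈ ℝ: y′_{n,λ}(x) = (1 + x·λ)·y′_{n−1,λ}(x) − y_{n−1,λ}(x), where ′ denotes the derivative with respect to x. -/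

import Mathlib

/-- The degenerate falling factorial `(1)_{m,λ} = ∏_{j=0}^{m-1} (1 - jλ)`. -/
noncomputable def degFall (lam : ℝ) (m : ℕ) : ℝ :=
  ∏ j ∈ Finset.range m, (1 - (j : ℝ) * lam)

/-- The Lah numbers: `L(n,k) = C(n−1,k−1)·n!/k!` for `1 ≤ k ≤ n`, with
`L(0,0) = 1` and `L(n,0) = 0` for `n ≥ 1`. -/
noncomputable def lah (n k : ℕ) : ℝ :=
  if k = 0 then (if n = 0 then 1 else 0)
  else (Nat.choose (n - 1) (k - 1) : ℝ) * (Nat.factorial n : ℝ) / (Nat.factorial k : ℝ)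

/-- `ℓ_{k,λ}(x)`: the coefficient of `t^k` in `e_λ(−xt/(1−t))`. -/
noncomputable def ellCoeff (lam : ℝ) (k : ℕ) (x : ℝ) : ℝ :=
  (1 / (Nat.factorial k : ℝ)) * ∑ j ∈ Finset.range (k + 1), (-x) ^ j * degFall lam j * lah k j

/-- `y_{n,λ}(x)`: the coefficient of `tⁿ` in `A(t)·e_λ(−xt/(1−t))`, where `A(t) = ∑ aₙ tⁿ`. -/
noncomputable def yCoeff (lam : ℝ) (a : ℕ → ℝ) (n : ℕ) (x : ℝ) : ℝ :=
  ∑ k ∈ Finset.range (n + 1), a (n - k) * ellCoeff lam k x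

/-- Explicit formula for the derivative of `ℓ_{k,λ}`. -/
noncomputable def ellD (lam : ℝ) (k : ℕ) (x : ℝ) : ℝ :=
  (1 / (Nat.factorial k : ℝ)) *
    ∑ i ∈ Finset.range k, (-((i : ℝ) + 1)) * (-x) ^ i * degFall lam (i + 1) * lah k (i + 1)

lemma degFall_succ (lam : ℝ) (i : ℕ) :
    degFall lam (i + 1) = degFall lam i * (1 - (i : ℝ) * lam) := by
  simp [degFall, Finset.prod_range_succ]

lemma ell_hasDerivAt (lam : ℝ) (k : ℕ) (x : ℝ) :
    HasDerivAt (ellCoeff lam k) (ellD lam k x) x := by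
  have h : HasDerivAt (ellCoeff lam k)
      ((1 / (Nat.factorial k : ℝ)) * ∑ j ∈ Finset.range (k + 1),
        ((((j : ℝ) * (-x) ^ (j - 1)) * (-1)) * degFall lam j) * lah k j) x := by
    have hsum : HasDerivAt (fun y : ℝ => ∑ j ∈ Finset.range (k + 1),
        (-y) ^ j * degFall lam j * lah k j)
        (∑ j ∈ Finset.range (k + 1),
          ((((j : ℝ) * (-x) ^ (j - 1)) * (-1)) * degFall lam j) * lah k j) x := by
      refine HasDerivAt.fun_sum fun j _ => ?_
      exact (((hasDerivAt_pow j (-x)).comp x (hasDerivAt_neg x)).mul_const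
        (degFall lam j)).mul_const (lah k j)
    exact hsum.const_mul _
  have heq : ((1 / (Nat.factorial k : ℝ)) * ∑ j ∈ Finset.range (k + 1),
        ((((j : ℝ) * (-x) ^ (j - 1)) * (-1)) * degFall lam j) * lah k j) = ellD lam k x := by
    rw [ellD, Finset.sum_range_succ']
    simp only [Nat.cast_zero, zero_mul, mul_zero, add_zero, Nat.cast_add, Nat.cast_one,
      Nat.add_sub_cancel]
    congr 1
    exact Finset.sum_congr rfl fun i _ => by ring
  rwa [heq] at h

lemma lah_rec (k i : ℕ) (hk : 1 ≤ k) :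
    ((i : ℝ) + 1) * lah (k + 1) (i + 1)
      = ((k : ℝ) + 1) * (((i : ℝ) + 1) * lah k (i + 1) + lah k i) := by
  obtain ⟨m, rfl⟩ := Nat.exists_eq_add_of_le hk
  rcases i with _ | j
  · simp [lah, Nat.factorial_succ]
  · have h2 : (j + 2 : ℕ) ≠ 0 := by omega
    have h1 : (j + 1 : ℕ) ≠ 0 := by omega
    simp only [lah, if_neg h2, if_neg h1, Nat.add_sub_cancel, Nat.add_sub_cancel_left]
    have hpascal : ((1 + m : ℕ).choose (j + 1) : ℝ)
        = ((m.choose j : ℕ) : ℝ) + ((m.choose (j + 1) : ℕ) : ℝ) := by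
      rw [add_comm 1 m]
      push_cast [Nat.choose_succ_succ]
      ring
    have hf1 : ((j + 2).factorial : ℝ) = ((j : ℝ) + 2) * ((j + 1).factorial : ℝ) := by
      push_cast [Nat.factorial_succ]; ring
    have hf2 : ((1 + m + 1).factorial : ℝ) = ((m : ℝ) + 2) * ((1 + m).factorial : ℝ) := by
      rw [Nat.factorial_succ]; push_cast; ring
    have hj1 : ((j + 1).factorial : ℝ) ≠ 0 := Nat.cast_ne_zero.2 (Nat.factorial_ne_zero _)
    have hj2 : ((j + 2).factorial : ℝ) ≠ 0 := Nat.cast_ne_zero.2 (Nat.factorial_ne_zero _)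
    push_cast
    rw [hpascal, hf1, hf2]
    field_simp
    ring

lemma ellD_rec (lam : ℝ) (k : ℕ) (x : ℝ) :
    ellD lam (k + 1) x = (1 + x * lam) * ellD lam k x - ellCoeff lam k x := by
  rcases Nat.eq_zero_or_pos k with rfl | hk
  · simp [ellD, ellCoeff, degFall, lah, Finset.sum_range_succ]
  · have hfk : ((k.factorial : ℝ)) ≠ 0 := Nat.cast_ne_zero.2 (Nat.factorial_ne_zero _)
    have hfk1 : (((k + 1).factorial : ℝ)) ≠ 0 := Nat.cast_ne_zero.2 (Nat.factorial_ne_zero _)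
    -- T i, S i, U i as in the informal plan
    set u : ℝ := -x with hu
    have hlahtop : lah k (k + 1) = 0 := by
      have : (k - 1).choose k = 0 := Nat.choose_eq_zero_of_lt (by omega)
      simp [lah, this]
    -- LHS as a sum over range (k+1)
    have hL : ellD lam (k + 1) x = ∑ i ∈ Finset.range (k + 1),
        (1 / ((k + 1).factorial : ℝ)) *
          ((-((i : ℝ) + 1)) * u ^ i * degFall lam (i + 1) * lah (k + 1) (i + 1)) := by
      rw [ellD, Finset.mul_sum]
    -- ellD lam k x extended to range (k+1)
    have hT : ellD lam k x = ∑ i ∈ Finset.range (k + 1),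
        (1 / (k.factorial : ℝ)) *
          ((-((i : ℝ) + 1)) * u ^ i * degFall lam (i + 1) * lah k (i + 1)) := by
      rw [ellD, Finset.mul_sum, Finset.sum_range_succ, hlahtop]
      ring
    -- x*lam*ellD lam k x as a sum over range (k+1)
    have hS : x * lam * ellD lam k x = ∑ i ∈ Finset.range (k + 1),
        (1 / (k.factorial : ℝ)) * (lam * (i : ℝ) * u ^ i * degFall lam i * lah k i) := by
      rw [Finset.sum_range_succ' (fun i => (1 / (k.factorial : ℝ)) *
        (lam * (i : ℝ) * u ^ i * degFall lam i * lah k i)) k]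
      simp only [Nat.cast_zero, mul_zero, zero_mul, add_zero, Nat.cast_add, Nat.cast_one]
      rw [ellD, Finset.mul_sum, Finset.mul_sum]
      refine Finset.sum_congr rfl fun i _ => ?_
      simp only [hu]
      ring
    have hU : ellCoeff lam k x = ∑ i ∈ Finset.range (k + 1),
        (1 / (k.factorial : ℝ)) * (u ^ i * degFall lam i * lah k i) := by
      rw [ellCoeff, Finset.mul_sum]
    have expand : (1 + x * lam) * ellD lam k x - ellCoeff lam k x
        = ellD lam k x + x * lam * ellD lam k x - ellCoeff lam k x := by ring
    rw [expand, hS, hT, hU, hL, ← Finset.sum_add_distrib, ← Finset.sum_sub_distrib]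
    refine Finset.sum_congr rfl fun i hi => ?_
    have hdf : degFall lam (i + 1) = degFall lam i * (1 - (i : ℝ) * lam) := degFall_succ lam i
    have hfs : (((k + 1).factorial : ℝ)) = ((k : ℝ) + 1) * (k.factorial : ℝ) := by
      rw [Nat.factorial_succ]; push_cast; ring
    have hk1 : ((k : ℝ) + 1) ≠ 0 := by positivity
    have hi1 : ((i : ℝ) + 1) ≠ 0 := by positivity
    have hlah' : lah (k + 1) (i + 1)
        = ((k : ℝ) + 1) * (((i : ℝ) + 1) * lah k (i + 1) + lah k i) / ((i : ℝ) + 1) := by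
      rw [eq_div_iff hi1]
      linear_combination lah_rec k i hk
    rw [hfs, hlah', hdf]
    field_simp
    ring

lemma y_hasDerivAt (lam : ℝ) (a : ℕ → ℝ) (n : ℕ) (x : ℝ) :
    HasDerivAt (yCoeff lam a n)
      (∑ k ∈ Finset.range (n + 1), a (n - k) * ellD lam k x) x := by
  refine HasDerivAt.fun_sum fun k _ => ?_
  exact (ell_hasDerivAt lam k x).const_mul _

/-- Theorem 6, first identity: `y′_{n,λ}(x) = (1 + xλ) y′_{n−1,λ}(x) − y_{n−1,λ}(x)` for `n ≥ 1`. -/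
theorem yCoeff_deriv_recurrence (lam : ℝ) (a : ℕ → ℝ) (n : ℕ) (hn : 1 ≤ n) (x : ℝ) :
    deriv (yCoeff lam a n) x =
      (1 + x * lam) * deriv (yCoeff lam a (n - 1)) x - yCoeff lam a (n - 1) x := by
  obtain ⟨m, rfl⟩ : ∃ m, n = m + 1 := ⟨n - 1, by omega⟩
  simp only [Nat.add_sub_cancel]
  rw [(y_hasDerivAt lam a (m + 1) x).deriv, (y_hasDerivAt lam a m x).deriv]
  rw [Finset.sum_range_succ' (fun k => a (m + 1 - k) * ellD lam k x) (m + 1)]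
  have h0 : ellD lam 0 x = 0 := by simp [ellD]
  rw [h0]
  simp only [Nat.succ_sub_succ_eq_sub, mul_zero, add_zero]
  have : ∀ k, ellD lam (k + 1) x = (1 + x * lam) * ellD lam k x - ellCoeff lam k x :=
    fun k => ellD_rec lam k x
  calc ∑ k ∈ Finset.range (m + 1), a (m - k) * ellD lam (k + 1) x
      = ∑ k ∈ Finset.range (m + 1),
          ((1 + x * lam) * (a (m - k) * ellD lam k x) - a (m - k) * ellCoeff lam k x) := by
        refine Finset.sum_congr rfl fun k _ => ?_
        rw [this k]; ring
    _ = (1 + x * lam) * ∑ k ∈ Finset.range (m + 1), a (m - k) * ellD lam k x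
          - yCoeff lam a m x := by
        rw [Finset.sum_sub_distrib, ← Finset.mul_sum, yCoeff]
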